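/- Let n ∈ ℕ, α ∈ ℝⁿ and set r = α(n). Let Q ⊆ B(H) be a set of operators, each of the form P_a or V_{a,b}, such that a(n) ≠ r whenever P_a ∈ Q with length(a) ≥ n, and a(n) ≠ r and b(n) ≠ r whenever V_{a,b} ∈ Q with length(a) = length(b) ≥ n. Then for every element C of the closed star-subalgebra of B(H) generated by Q, the function x ↦ ⟨Cχ_x, χ_x⟩ is constant on X_α, and ⟨Cχ_y, χ_z⟩ = 0 for all distinct y, z ∈ X_α. -/

import Mathlib

open scoped Classical

noncomputable section

open scoped InnerProductSpace ENNReal NNReal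

set_option maxHeartbeats 1000000
set_option synthInstance.maxHeartbeats 400000

/-- The set of real sequences. -/
abbrev X : Type := ℕ → ℝ

/-- The Hilbert space `ℓ²(X)`. -/
abbrev H : Type := lp (fun _ : X => ℂ) 2

/-- `Xa a` is the set of sequences extending the `n`-tuple `a`. -/
def Xa {n : ℕ} (a : Fin n → ℝ) : Set X := {x | ∀ i : Fin n, x i = a i}

/-- Replace the initial segment of `x` by the tuple `a` (this is `f_{a,b}` for any `b`). -/
def repl {n : ℕ} (a : Fin n → ℝ) (x : X) : X := fun i => if h : i < n then a ⟨i, h⟩ else x i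

/-- The standard basis vector of `H` supported at `x`. -/
def chi (x : X) : H := lp.single 2 x (1 : ℂ)

/-- `P` is the family of orthogonal projections `P_a` onto `ℓ²(X_a)`. -/
def IsProjFamily (P : ∀ n : ℕ, (Fin n → ℝ) → (H →L[ℂ] H)) : Prop :=
  ∀ (n : ℕ) (a : Fin n → ℝ) (ξ : H) (x : X),
    P n a ξ x = if x ∈ Xa a then ξ x else 0

/-- `V` is the family of partial isometries `V_{a,b}`. -/
def IsVFamily (V : ∀ n : ℕ, (Fin n → ℝ) → (Fin n → ℝ) → (H →L[ℂ] H)) : Prop :=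
  ∀ (n : ℕ) (a b : Fin n → ℝ) (ξ : H) (x : X),
    V n a b ξ x = if x ∈ Xa b then ξ (repl a x) else 0

namespace Stmt7Aux

lemma two_pos' : (0:ℝ) < (2:ℝ≥0∞).toReal := by norm_num

/-- The underlying function of the operator `ξ ↦ (x ↦ ε x * ξ (σ x))`. -/
def opFun (σ : X → X) (ε : X → ℂ) (ξ : X → ℂ) : X → ℂ := fun x => ε x * ξ (σ x)

lemma memℓp_opFun (σ : X → X) (hσ : Function.Involutive σ) (ε : X → ℂ)
    (hε : ∀ x, ‖ε x‖ = 1) (ξ : H) : Memℓp (opFun σ ε ξ) 2 := by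
  apply memℓp_gen
  have hs : Summable fun x : X => ‖(ξ : X → ℂ) x‖ ^ (2:ℝ≥0∞).toReal :=
    (lp.memℓp ξ).summable two_pos'
  have hs2 : Summable ((fun x : X => ‖(ξ : X → ℂ) x‖ ^ (2:ℝ≥0∞).toReal) ∘ (hσ.toPerm σ)) :=
    ((hσ.toPerm σ).summable_iff).2 hs
  refine hs2.congr fun x => ?_
  simp only [Function.comp_apply, Function.Involutive.coe_toPerm, opFun, norm_mul, hε x, one_mul]

/-- The operator as a linear map. -/
def opL (σ : X → X) (hσ : Function.Involutive σ) (ε : X → ℂ)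
    (hε : ∀ x, ‖ε x‖ = 1) : H →ₗ[ℂ] H where
  toFun ξ := ⟨opFun σ ε ξ, memℓp_opFun σ hσ ε hε ξ⟩
  map_add' ξ η := by
    refine lp.ext (funext fun x => ?_)
    simp [opFun, lp.coeFn_add, Pi.add_apply, mul_add]; rfl
  map_smul' c ξ := by
    refine lp.ext (funext fun x => ?_)
    simp only [opFun, lp.coeFn_smul, Pi.smul_apply, smul_eq_mul, RingHom.id_apply]
    ring

lemma opL_norm (σ : X → X) (hσ : Function.Involutive σ) (ε : X → ℂ)
    (hε : ∀ x, ‖ε x‖ = 1) (ξ : H) : ‖opL σ hσ ε hε ξ‖ ≤ 1 * ‖ξ‖ := by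
  rw [one_mul]
  refine lp.norm_le_of_tsum_le two_pos' (norm_nonneg ξ) ?_
  have h1 : ∀ x : X, ‖(opL σ hσ ε hε ξ : X → ℂ) x‖ ^ (2:ℝ≥0∞).toReal
      = ‖(ξ : X → ℂ) (σ x)‖ ^ (2:ℝ≥0∞).toReal := by
    intro x
    show ‖opFun σ ε ξ x‖ ^ (2:ℝ≥0∞).toReal = _
    simp only [opFun, norm_mul, hε x, one_mul]
  have h2 : ∑' x : X, ‖(ξ : X → ℂ) (σ x)‖ ^ (2:ℝ≥0∞).toReal
      = ∑' x : X, ‖(ξ : X → ℂ) x‖ ^ (2:ℝ≥0∞).toReal := by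
    have h := (hσ.toPerm σ).tsum_eq (fun y : X => ‖(ξ : X → ℂ) y‖ ^ (2:ℝ≥0∞).toReal)
    simpa [Function.Involutive.coe_toPerm] using h
  calc (∑' x : X, ‖(opL σ hσ ε hε ξ : X → ℂ) x‖ ^ (2:ℝ≥0∞).toReal)
      = ∑' x : X, ‖(ξ : X → ℂ) (σ x)‖ ^ (2:ℝ≥0∞).toReal := tsum_congr h1
    _ = ∑' x : X, ‖(ξ : X → ℂ) x‖ ^ (2:ℝ≥0∞).toReal := h2
    _ ≤ ‖ξ‖ ^ (2:ℝ≥0∞).toReal := le_of_eq (lp.norm_rpow_eq_tsum two_pos' ξ).symm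

/-- The operator `ξ ↦ (x ↦ ε x * ξ (σ x))` as a continuous linear map. -/
def op (σ : X → X) (hσ : Function.Involutive σ) (ε : X → ℂ)
    (hε : ∀ x, ‖ε x‖ = 1) : H →L[ℂ] H :=
  LinearMap.mkContinuous (opL σ hσ ε hε) 1 (opL_norm σ hσ ε hε)

lemma op_apply (σ : X → X) (hσ : Function.Involutive σ) (ε : X → ℂ)
    (hε : ∀ x, ‖ε x‖ = 1) (ξ : H) (x : X) :
    (op σ hσ ε hε ξ : X → ℂ) x = ε x * ξ (σ x) := rfl

lemma conj_eps (ε : X → ℂ) (hε1 : ∀ x, ε x = 1 ∨ ε x = -1) (x : X) :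
    (starRingEnd ℂ) (ε x) = ε x := by
  rcases hε1 x with h | h <;> rw [h] <;> simp

lemma eps_sq (ε : X → ℂ) (hε1 : ∀ x, ε x = 1 ∨ ε x = -1) (x : X) :
    ε x * ε x = 1 := by
  rcases hε1 x with h | h <;> rw [h] <;> ring

lemma norm_eps (ε : X → ℂ) (hε1 : ∀ x, ε x = 1 ∨ ε x = -1) (x : X) : ‖ε x‖ = 1 := by
  rcases hε1 x with h | h <;> rw [h] <;> simp

lemma op_op (σ : X → X) (hσ : Function.Involutive σ) (ε : X → ℂ)
    (hε : ∀ x, ‖ε x‖ = 1) (hε1 : ∀ x, ε x = 1 ∨ ε x = -1)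
    (hεσ : ∀ x, ε (σ x) = ε x) (ξ : H) :
    op σ hσ ε hε (op σ hσ ε hε ξ) = ξ := by
  refine lp.ext (funext fun x => ?_)
  rw [op_apply, op_apply, hεσ, hσ x, ← mul_assoc, eps_sq ε hε1, one_mul]

lemma op_selfadj (σ : X → X) (hσ : Function.Involutive σ) (ε : X → ℂ)
    (hε : ∀ x, ‖ε x‖ = 1) (hε1 : ∀ x, ε x = 1 ∨ ε x = -1)
    (hεσ : ∀ x, ε (σ x) = ε x) (ξ η : H) :
    ⟪op σ hσ ε hε ξ, η⟫_ℂ = ⟪ξ, op σ hσ ε hε η⟫_ℂ := by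
  rw [lp.inner_eq_tsum, lp.inner_eq_tsum]
  have h2 : ∑' x : X, ⟪(ξ : X → ℂ) x, (op σ hσ ε hε η : X → ℂ) x⟫_ℂ
      = ∑' x : X, ⟪(ξ : X → ℂ) (σ x), (op σ hσ ε hε η : X → ℂ) (σ x)⟫_ℂ := by
    exact ((hσ.toPerm σ).tsum_eq
      (fun x => ⟪(ξ : X → ℂ) x, (op σ hσ ε hε η : X → ℂ) x⟫_ℂ)).symm
  rw [h2]
  refine tsum_congr fun x => ?_
  rw [op_apply, op_apply, hσ x, hεσ]
  simp only [RCLike.inner_apply, map_mul, conj_eps ε hε1]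
  ring

lemma op_chi (σ : X → X) (hσ : Function.Involutive σ) (ε : X → ℂ)
    (hε : ∀ x, ‖ε x‖ = 1) (hεσ : ∀ x, ε (σ x) = ε x) (x : X) :
    op σ hσ ε hε (chi x) = ε x • chi (σ x) := by
  refine lp.ext (funext fun w => ?_)
  rw [lp.coeFn_smul, Pi.smul_apply, op_apply, smul_eq_mul]
  simp only [chi]
  by_cases hw : w = σ x
  · subst hw
    rw [hεσ, hσ x, lp.single_apply_self, lp.single_apply_self]
  · have hσw : σ w ≠ x := fun h => hw (by rw [← h, hσ w])
    rw [lp.single_apply_ne 2 x _ hσw, lp.single_apply_ne 2 (σ x) _ hw, mul_zero, mul_zero]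

/-- If a self-adjoint `T` commutes with every element of `Q`, it commutes with every element of
the closed star subalgebra generated by `Q`. -/
lemma comm_of_mem_closure {Q : Set (H →L[ℂ] H)} {T C : H →L[ℂ] H}
    (hT : ∀ ξ η : H, ⟪T ξ, η⟫_ℂ = ⟪ξ, T η⟫_ℂ)
    (hQ : ∀ W ∈ Q, W * T = T * W)
    (hC : C ∈ (NonUnitalStarAlgebra.adjoin ℂ Q).topologicalClosure) :
    C * T = T * C := by
  have hTsa : star T = T := by
    rw [ContinuousLinearMap.star_eq_adjoint]
    exact ((ContinuousLinearMap.eq_adjoint_iff T T).2 hT).symm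
  have hclosed : IsClosed {A : H →L[ℂ] H | A * T = T * A} := by
    have heq : {A : H →L[ℂ] H | A * T = T * A}
        = (fun A : H →L[ℂ] H => A * T - T * A) ⁻¹' {0} := by
      ext A
      simp [sub_eq_zero]
    rw [heq]
    exact IsClosed.preimage ((continuous_id.mul continuous_const).sub
      (continuous_const.mul continuous_id)) isClosed_singleton
  have hsub : (NonUnitalStarAlgebra.adjoin ℂ Q : Set (H →L[ℂ] H))
      ⊆ {A : H →L[ℂ] H | A * T = T * A} := by
    intro A hA
    induction hA using NonUnitalStarAlgebra.adjoin_induction with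
    | mem W hW => exact hQ W hW
    | add x y hx hy ihx ihy =>
      show (x + y) * T = T * (x + y)
      rw [add_mul, mul_add, ihx, ihy]
    | zero => show (0:H →L[ℂ] H) * T = T * 0; rw [zero_mul, mul_zero]
    | mul x y hx hy ihx ihy =>
      show x * y * T = T * (x * y)
      rw [mul_assoc, ihy, ← mul_assoc, ihx, mul_assoc]
    | smul c x hx ihx =>
      show (c • x) * T = T * (c • x)
      rw [smul_mul_assoc, ihx, mul_smul_comm]
    | star x hx ihx =>
      show star x * T = T * star x
      calc star x * T = star x * star T := by rw [hTsa]
        _ = star (T * x) := (star_mul T x).symm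
        _ = star (x * T) := by rw [ihx]
        _ = star T * star x := star_mul x T
        _ = T * star x := by rw [hTsa]
  exact closure_minimal hsub hclosed hC


section Combinatorics

variable (n : ℕ) (r : ℝ)

/-- The tail-swap map exchanging the tails (beyond `n`) of `y` and `z` among sequences whose
`(n-1)`-st entry is `r`. -/
def sw (y z : X) (x : X) : X :=
  if x (n-1) = r ∧ ∀ i, n ≤ i → x i = y i then fun i => if i < n then x i else z i
  else if x (n-1) = r ∧ ∀ i, n ≤ i → x i = z i then fun i => if i < n then x i else y i
  else x

/-- The sign map: `-1` on sequences with `(n-1)`-st entry `r` and tail that of `z`, else `1`. -/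
def eps (z : X) (x : X) : ℂ :=
  if x (n-1) = r ∧ ∀ i, n ≤ i → x i = z i then -1 else 1

lemma sw_eq1 (y z x : X) (h : x (n-1) = r ∧ ∀ i, n ≤ i → x i = y i) :
    sw n r y z x = fun i => if i < n then x i else z i := by
  unfold sw; rw [if_pos h]

lemma sw_eq2 (y z x : X) (h1 : ¬(x (n-1) = r ∧ ∀ i, n ≤ i → x i = y i))
    (h2 : x (n-1) = r ∧ ∀ i, n ≤ i → x i = z i) :
    sw n r y z x = fun i => if i < n then x i else y i := by
  unfold sw; rw [if_neg h1, if_pos h2]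

lemma sw_eq3 (y z x : X) (h1 : ¬(x (n-1) = r ∧ ∀ i, n ≤ i → x i = y i))
    (h2 : ¬(x (n-1) = r ∧ ∀ i, n ≤ i → x i = z i)) :
    sw n r y z x = x := by
  unfold sw; rw [if_neg h1, if_neg h2]

lemma sw_low (hn : 0 < n) (y z x : X) (i : ℕ) (hi : i < n) : sw n r y z x i = x i := by
  unfold sw; split_ifs with h1 h2 <;> simp [hi]

lemma sw_fix (y z x : X) (hx : x (n-1) ≠ r) : sw n r y z x = x :=
  sw_eq3 n r y z x (fun h => hx h.1) (fun h => hx h.1)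

lemma eps_fix (z x : X) (hx : x (n-1) ≠ r) : eps n r z x = 1 :=
  if_neg (fun h => hx h.1)

lemma eps_vals (z x : X) : eps n r z x = 1 ∨ eps n r z x = -1 := by
  unfold eps; split_ifs <;> simp

lemma sw_invol (hn : 0 < n) (y z : X) (htail : ∃ j, n ≤ j ∧ y j ≠ z j) :
    Function.Involutive (sw n r y z) := by
  obtain ⟨j, hjn, hjne⟩ := htail
  intro x
  by_cases h1 : x (n-1) = r ∧ ∀ i, n ≤ i → x i = y i
  · rw [sw_eq1 n r y z x h1]
    have ha : ¬((fun i => if i < n then x i else z i) (n-1) = r ∧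
        ∀ i, n ≤ i → (fun i => if i < n then x i else z i) i = y i) := by
      rintro ⟨-, h⟩
      have hj := h j hjn
      simp only [show ¬ j < n by omega, if_false] at hj
      exact hjne hj.symm
    have hb : ((fun i => if i < n then x i else z i) (n-1) = r ∧
        ∀ i, n ≤ i → (fun i => if i < n then x i else z i) i = z i) := by
      refine ⟨?_, fun i hi => by simp [show ¬ i < n by omega]⟩
      simp only [show n - 1 < n by omega, if_true]
      exact h1.1
    rw [sw_eq2 n r y z _ ha hb]
    funext i
    by_cases hi : i < n
    · simp [hi]
    · simp only [hi, if_false]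
      exact (h1.2 i (by omega)).symm
  · by_cases h2 : x (n-1) = r ∧ ∀ i, n ≤ i → x i = z i
    · rw [sw_eq2 n r y z x h1 h2]
      have ha : ((fun i => if i < n then x i else y i) (n-1) = r ∧
          ∀ i, n ≤ i → (fun i => if i < n then x i else y i) i = y i) := by
        refine ⟨?_, fun i hi => by simp [show ¬ i < n by omega]⟩
        simp only [show n - 1 < n by omega, if_true]
        exact h2.1
      rw [sw_eq1 n r y z _ ha]
      funext i
      by_cases hi : i < n
      · simp [hi]
      · simp only [hi, if_false]
        exact (h2.2 i (by omega)).symm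
    · rw [sw_eq3 n r y z x h1 h2, sw_eq3 n r y z x h1 h2]

lemma repl_if {m : ℕ} (hm : m < n) (a : Fin m → ℝ) (x w : X) :
    (fun i => if i < n then repl a x i else w i) = repl a (fun i => if i < n then x i else w i) := by
  funext i
  by_cases him : i < m
  · simp [repl, him, show i < n by omega]
  · by_cases hin : i < n <;> simp [repl, him, hin]

lemma repl_head {m : ℕ} (hn : 0 < n) (hm : m < n) (a : Fin m → ℝ) (x : X) :
    repl a x (n-1) = x (n-1) := dif_neg (by omega)

lemma repl_tail {m : ℕ} (hm : m < n) (a : Fin m → ℝ) (x : X) (i : ℕ) (hi : n ≤ i) :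
    repl a x i = x i := dif_neg (by omega)

lemma cond_repl {m : ℕ} (hn : 0 < n) (hm : m < n) (a : Fin m → ℝ) (w x : X) :
    (repl a x (n-1) = r ∧ ∀ i, n ≤ i → repl a x i = w i)
      ↔ (x (n-1) = r ∧ ∀ i, n ≤ i → x i = w i) := by
  rw [repl_head n hn hm a x]
  constructor
  · rintro ⟨ha, hb⟩
    exact ⟨ha, fun i hi => (repl_tail n hm a x i hi).symm.trans (hb i hi)⟩
  · rintro ⟨ha, hb⟩
    exact ⟨ha, fun i hi => (repl_tail n hm a x i hi).trans (hb i hi)⟩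

lemma sw_repl (hn : 0 < n) (y z : X) {m : ℕ} (hm : m < n) (a : Fin m → ℝ) (x : X) :
    sw n r y z (repl a x) = repl a (sw n r y z x) := by
  by_cases h1 : x (n-1) = r ∧ ∀ i, n ≤ i → x i = y i
  · rw [sw_eq1 n r y z _ ((cond_repl n r hn hm a y x).2 h1), sw_eq1 n r y z x h1]
    exact repl_if n hm a x z
  · by_cases h2 : x (n-1) = r ∧ ∀ i, n ≤ i → x i = z i
    · rw [sw_eq2 n r y z _ (fun h => h1 ((cond_repl n r hn hm a y x).1 h))
        ((cond_repl n r hn hm a z x).2 h2), sw_eq2 n r y z x h1 h2]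
      exact repl_if n hm a x y
    · rw [sw_eq3 n r y z _ (fun h => h1 ((cond_repl n r hn hm a y x).1 h))
        (fun h => h2 ((cond_repl n r hn hm a z x).1 h)), sw_eq3 n r y z x h1 h2]

lemma eps_repl (hn : 0 < n) (z : X) {m : ℕ} (hm : m < n) (a : Fin m → ℝ) (x : X) :
    eps n r z (repl a x) = eps n r z x := by
  unfold eps
  exact if_congr (cond_repl n r hn hm a z x) rfl rfl

lemma sw_y (hn : 0 < n) (y z : X) (hhead : ∀ i, i < n → y i = z i) (hyr : y (n-1) = r) :
    sw n r y z y = z := by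
  rw [sw_eq1 n r y z y ⟨hyr, fun i hi => rfl⟩]
  funext i
  by_cases hi : i < n
  · simp only [hi, if_true]; exact hhead i hi
  · simp [hi]

lemma sw_z (hn : 0 < n) (y z : X) (hhead : ∀ i, i < n → y i = z i) (hzr : z (n-1) = r)
    (htail : ∃ j, n ≤ j ∧ y j ≠ z j) : sw n r y z z = y := by
  obtain ⟨j, hjn, hjne⟩ := htail
  rw [sw_eq2 n r y z z (fun h => hjne ((h.2 j hjn)).symm) ⟨hzr, fun i hi => rfl⟩]
  funext i
  by_cases hi : i < n
  · simp only [hi, if_true]; exact (hhead i hi).symm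
  · simp [hi]

lemma eps_y (y z : X) (htail : ∃ j, n ≤ j ∧ y j ≠ z j) : eps n r z y = 1 := by
  obtain ⟨j, hjn, hjne⟩ := htail
  exact if_neg (fun h => hjne (h.2 j hjn))

lemma eps_z (z : X) (hzr : z (n-1) = r) : eps n r z z = -1 :=
  if_pos ⟨hzr, fun i hi => rfl⟩

end Combinatorics

section GenComm

/-- A pair `(σ, ε)` satisfying the structural conditions commutes with every generator. -/
lemma genComm (P : ∀ n : ℕ, (Fin n → ℝ) → (H →L[ℂ] H)) (hP : IsProjFamily P)
    (V : ∀ n : ℕ, (Fin n → ℝ) → (Fin n → ℝ) → (H →L[ℂ] H)) (hV : IsVFamily V)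
    (n : ℕ) (hn : 0 < n) (r : ℝ) (Q : Set (H →L[ℂ] H))
    (hQform : ∀ W ∈ Q, (∃ (m : ℕ) (a : Fin m → ℝ), W = P m a) ∨
      ∃ (m : ℕ) (a b : Fin m → ℝ), W = V m a b)
    (hQP : ∀ (m : ℕ) (a : Fin m → ℝ), P m a ∈ Q → ∀ h : n ≤ m, a ⟨n - 1, Nat.lt_of_lt_of_le (Nat.sub_lt hn Nat.one_pos) h⟩ ≠ r)
    (hQV : ∀ (m : ℕ) (a b : Fin m → ℝ), V m a b ∈ Q → ∀ h : n ≤ m,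
      a ⟨n - 1, Nat.lt_of_lt_of_le (Nat.sub_lt hn Nat.one_pos) h⟩ ≠ r ∧ b ⟨n - 1, Nat.lt_of_lt_of_le (Nat.sub_lt hn Nat.one_pos) h⟩ ≠ r)
    (σ : X → X) (hσ : Function.Involutive σ) (ε : X → ℂ) (hεnorm : ∀ x, ‖ε x‖ = 1)
    (hB : ∀ (x : X) (i : ℕ), i < n → σ x i = x i)
    (hfixσ : ∀ x : X, x (n-1) ≠ r → σ x = x)
    (hfixε : ∀ x : X, x (n-1) ≠ r → ε x = 1)
    (hreplσ : ∀ (m : ℕ), m < n → ∀ (a : Fin m → ℝ) (x : X), σ (repl a x) = repl a (σ x))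
    (hreplε : ∀ (m : ℕ), m < n → ∀ (a : Fin m → ℝ) (x : X), ε (repl a x) = ε x) :
    ∀ W ∈ Q, W * op σ hσ ε hεnorm = op σ hσ ε hεnorm * W := by
  have key : ∀ (m : ℕ) (a : Fin m → ℝ), (∀ h : n ≤ m, a ⟨n - 1, Nat.lt_of_lt_of_le (Nat.sub_lt hn Nat.one_pos) h⟩ ≠ r) →
      ∀ x : X, (x ∈ Xa a ↔ σ x ∈ Xa a) := by
    intro m a ha x
    by_cases hm : n ≤ m
    · constructor
      · intro hx
        have hxr : x (n-1) ≠ r := by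
          have h1 : x (n-1) = a ⟨n-1, by omega⟩ := hx ⟨n-1, by omega⟩
          rw [h1]; exact ha hm
        rw [hfixσ x hxr]; exact hx
      · intro hx
        have hxr : x (n-1) ≠ r := by
          have h1 : σ x (n-1) = a ⟨n-1, by omega⟩ := hx ⟨n-1, by omega⟩
          rw [← hB x (n-1) (by omega), h1]; exact ha hm
        rwa [hfixσ x hxr] at hx
    · have hm' : m < n := by omega
      constructor
      · intro hx i
        rw [hB x i.1 (lt_trans i.isLt hm')]; exact hx i
      · intro hx i
        have := hx i
        rwa [hB x i.1 (lt_trans i.isLt hm')] at this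
  intro W hW
  rcases hQform W hW with ⟨m, a, rfl⟩ | ⟨m, a, b, rfl⟩
  · -- projection case
    have ha := hQP m a hW
    refine ContinuousLinearMap.ext fun ξ => lp.ext (funext fun x => ?_)
    simp only [ContinuousLinearMap.mul_apply]
    rw [hP m a (op σ hσ ε hεnorm ξ) x, op_apply σ hσ ε hεnorm ((P m a) ξ) x, hP m a ξ (σ x)]
    by_cases hx : x ∈ Xa a
    · rw [if_pos hx, if_pos ((key m a ha x).1 hx), op_apply]
    · rw [if_neg hx, if_neg (fun h => hx ((key m a ha x).2 h)), mul_zero]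
  · -- partial isometry case
    have hab := hQV m a b hW
    have hb : ∀ h : n ≤ m, b ⟨n - 1, by omega⟩ ≠ r := fun h => (hab h).2
    refine ContinuousLinearMap.ext fun ξ => lp.ext (funext fun x => ?_)
    simp only [ContinuousLinearMap.mul_apply]
    rw [hV m a b (op σ hσ ε hεnorm ξ) x, op_apply σ hσ ε hεnorm ((V m a b) ξ) x, hV m a b ξ (σ x)]
    by_cases hx : x ∈ Xa b
    · rw [if_pos hx, if_pos ((key m b hb x).1 hx), op_apply]
      by_cases hm : n ≤ m
      · have hxr : x (n-1) ≠ r := by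
          have h1 : x (n-1) = b ⟨n-1, by omega⟩ := hx ⟨n-1, by omega⟩
          rw [h1]; exact hb hm
        have hrr : repl a x (n-1) ≠ r := by
          have h2 : repl a x (n-1) = a ⟨n-1, by omega⟩ := by
            simp only [repl]
            rw [dif_pos (show n-1 < m by omega)]
          rw [h2]; exact (hab hm).1
        rw [hfixσ x hxr, hfixσ _ hrr, hfixε x hxr, hfixε _ hrr]
      · have hm' : m < n := by omega
        rw [hreplσ m hm' a x, hreplε m hm' a x]
    · rw [if_neg hx, if_neg (fun h => hx ((key m b hb x).2 h)), mul_zero]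

end GenComm

end Stmt7Aux

/-- let `α ∈ ℝⁿ` and `r = α(n)`.  If `Q` is a set of operators, each of the form
`P_a` or `V_{a,b}`, such that the `n`-th entries of the tuples involved (when defined) are
never `r`, then every element `C` of the closed star-subalgebra generated by `Q` has
`x ↦ ⟨Cχ_x, χ_x⟩` constant on `X_α` and `⟨Cχ_y, χ_z⟩ = 0` for distinct `y, z ∈ X_α`. -/
theorem stmt7 (P : ∀ n : ℕ, (Fin n → ℝ) → (H →L[ℂ] H)) (hP : IsProjFamily P)
    (V : ∀ n : ℕ, (Fin n → ℝ) → (Fin n → ℝ) → (H →L[ℂ] H)) (hV : IsVFamily V)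
    (n : ℕ) (hn : 0 < n) (α : Fin n → ℝ) (r : ℝ) (hr : r = α ⟨n - 1, by omega⟩)
    (Q : Set (H →L[ℂ] H))
    (hQform : ∀ W ∈ Q, (∃ (m : ℕ) (a : Fin m → ℝ), W = P m a) ∨
      ∃ (m : ℕ) (a b : Fin m → ℝ), W = V m a b)
    (hQP : ∀ (m : ℕ) (a : Fin m → ℝ), P m a ∈ Q → ∀ h : n ≤ m, a ⟨n - 1, by omega⟩ ≠ r)
    (hQV : ∀ (m : ℕ) (a b : Fin m → ℝ), V m a b ∈ Q → ∀ h : n ≤ m,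
      a ⟨n - 1, by omega⟩ ≠ r ∧ b ⟨n - 1, by omega⟩ ≠ r)
    (C : H →L[ℂ] H)
    (hC : C ∈ (NonUnitalStarAlgebra.adjoin ℂ Q).topologicalClosure) :
    (∀ y ∈ Xa α, ∀ z ∈ Xa α, (inner ℂ (C (chi y)) (chi y) : ℂ) = inner ℂ (C (chi z)) (chi z)) ∧
      (∀ y ∈ Xa α, ∀ z ∈ Xa α, y ≠ z → (inner ℂ (C (chi y)) (chi z) : ℂ) = 0) := by
  constructor
  · -- diagonal constancy
    intro y hy z hz
    by_cases hyz : y = z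
    · rw [hyz]
    · have hhead : ∀ i, i < n → y i = z i := fun i hi => by
        rw [hy ⟨i, hi⟩, hz ⟨i, hi⟩]
      have htail : ∃ j, n ≤ j ∧ y j ≠ z j := by
        by_contra hcon
        push_neg at hcon
        apply hyz
        funext i
        by_cases hi : i < n
        · exact hhead i hi
        · exact hcon i (by omega)
      have hyr : y (n-1) = r := by rw [hr]; exact hy ⟨n-1, by omega⟩
      have hzr : z (n-1) = r := by rw [hr]; exact hz ⟨n-1, by omega⟩
      have hσ : Function.Involutive (Stmt7Aux.sw n r y z) :=
        Stmt7Aux.sw_invol n r hn y z htail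
      have hεnorm : ∀ x : X, ‖(fun _ : X => (1:ℂ)) x‖ = 1 := fun x => norm_one
      set U := Stmt7Aux.op (Stmt7Aux.sw n r y z) hσ (fun _ : X => (1:ℂ)) hεnorm with hUdef
      have hcomm : ∀ W ∈ Q, W * U = U * W :=
        Stmt7Aux.genComm P hP V hV n hn r Q hQform hQP hQV
          (Stmt7Aux.sw n r y z) hσ (fun _ => (1:ℂ)) hεnorm
          (fun x i hi => Stmt7Aux.sw_low n r hn y z x i hi)
          (fun x hx => Stmt7Aux.sw_fix n r y z x hx)
          (fun x _ => rfl)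
          (fun m hm a x => Stmt7Aux.sw_repl n r hn y z hm a x)
          (fun m hm a x => rfl)
      have hsa : ∀ ξ η : H, (inner ℂ (U ξ) η : ℂ) = inner ℂ ξ (U η) :=
        Stmt7Aux.op_selfadj _ hσ _ hεnorm (fun x => Or.inl rfl) (fun x => rfl)
      have hCU : C * U = U * C := Stmt7Aux.comm_of_mem_closure hsa hcomm hC
      have hUz : U (chi z) = chi y := by
        rw [hUdef, Stmt7Aux.op_chi _ hσ _ hεnorm (fun x => rfl) z,
          Stmt7Aux.sw_z n r hn y z hhead hzr htail, one_smul]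
      have hUU : U (U (chi z)) = chi z :=
        Stmt7Aux.op_op _ hσ _ hεnorm (fun x => Or.inl rfl) (fun x => rfl) (chi z)
      have hswap : C (U (chi z)) = U (C (chi z)) := by
        have h := congrArg (fun A : H →L[ℂ] H => A (chi z)) hCU
        simpa [ContinuousLinearMap.mul_apply] using h
      calc (inner ℂ (C (chi y)) (chi y) : ℂ)
          = inner ℂ (C (U (chi z))) (U (chi z)) := by rw [hUz]
        _ = inner ℂ (U (C (chi z))) (U (chi z)) := by rw [hswap]
        _ = inner ℂ (C (chi z)) (U (U (chi z))) := hsa _ _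
        _ = inner ℂ (C (chi z)) (chi z) := by rw [hUU]
  · -- off-diagonal vanishing
    intro y hy z hz hyz
    have hhead : ∀ i, i < n → y i = z i := fun i hi => by
      rw [hy ⟨i, hi⟩, hz ⟨i, hi⟩]
    have htail : ∃ j, n ≤ j ∧ y j ≠ z j := by
      by_contra hcon
      push_neg at hcon
      apply hyz
      funext i
      by_cases hi : i < n
      · exact hhead i hi
      · exact hcon i (by omega)
    have hzr : z (n-1) = r := by rw [hr]; exact hz ⟨n-1, by omega⟩
    have hσ : Function.Involutive (id : X → X) := fun x => rfl
    have hεnorm : ∀ x : X, ‖Stmt7Aux.eps n r z x‖ = 1 :=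
      Stmt7Aux.norm_eps _ (Stmt7Aux.eps_vals n r z)
    set D := Stmt7Aux.op (id : X → X) hσ (Stmt7Aux.eps n r z) hεnorm with hDdef
    have hcomm : ∀ W ∈ Q, W * D = D * W :=
      Stmt7Aux.genComm P hP V hV n hn r Q hQform hQP hQV
        (id : X → X) hσ (Stmt7Aux.eps n r z) hεnorm
        (fun x i hi => rfl)
        (fun x hx => rfl)
        (fun x hx => Stmt7Aux.eps_fix n r z x hx)
        (fun m hm a x => rfl)
        (fun m hm a x => Stmt7Aux.eps_repl n r hn z hm a x)
    have hsa : ∀ ξ η : H, (inner ℂ (D ξ) η : ℂ) = inner ℂ ξ (D η) :=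
      Stmt7Aux.op_selfadj _ hσ _ hεnorm (Stmt7Aux.eps_vals n r z) (fun x => rfl)
    have hCD : C * D = D * C := Stmt7Aux.comm_of_mem_closure hsa hcomm hC
    have hDy : D (chi y) = chi y := by
      rw [hDdef, Stmt7Aux.op_chi _ hσ _ hεnorm (fun x => rfl) y,
        Stmt7Aux.eps_y n r y z htail, one_smul, id]
    have hDz : D (chi z) = -(chi z) := by
      rw [hDdef, Stmt7Aux.op_chi _ hσ _ hεnorm (fun x => rfl) z,
        Stmt7Aux.eps_z n r z hzr, id, neg_smul, one_smul]
    have hswap : C (D (chi y)) = D (C (chi y)) := by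
      have h := congrArg (fun A : H →L[ℂ] H => A (chi y)) hCD
      simpa [ContinuousLinearMap.mul_apply] using h
    have hkey : (inner ℂ (C (chi y)) (chi z) : ℂ) = -(inner ℂ (C (chi y)) (chi z)) := by
      calc (inner ℂ (C (chi y)) (chi z) : ℂ)
          = inner ℂ (C (D (chi y))) (chi z) := by rw [hDy]
        _ = inner ℂ (D (C (chi y))) (chi z) := by rw [hswap]
        _ = inner ℂ (C (chi y)) (D (chi z)) := hsa _ _
        _ = inner ℂ (C (chi y)) (-(chi z)) := by rw [hDz]
        _ = -(inner ℂ (C (chi y)) (chi z)) := inner_neg_right _ _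
    linear_combination hkey / 2


end
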